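/- Let ψ : ℝ → [0,∞) be Lebesgue-integrable and define ψ̌(x) := ∫_{−∞}^{x} e^{−(x−y)} ψ(y) dy. Then for every δ>0: (1) ψ̌(x+δ) ≥ e^{−δ} ψ̌(x) for all x; (2) δ Σ_{j∈ℤ} inf_{x∈[jδ,(j+1)δ]} ψ̌(x) ≥ e^{−2δ} ∫_ℝ ψ̌(x) dx; and (3) δ Σ_{j∈ℤ} sup_{x∈[jδ,(j+1)δ]} ψ̌(x) ≤ e^{2δ} ∫_ℝ ψ̌(x) dx. In particular the upper Riemann sums are finite and the difference between the upper and lower Riemann sums tends to 0 as δ→0 (direct Riemann integrability of ψ̌). -/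

import Mathlib

open MeasureTheory Real Filter

/-- For a nonnegative Lebesgue-integrable `ψ : ℝ → ℝ` and the one-sided exponential
convolution `ψ̌ x = ∫_{-∞}^x e^{-(x-y)} ψ(y) dy`, for every `δ > 0`:
(1) `ψ̌ (x + δ) ≥ e^{-δ} ψ̌ x`; (2) the lower Riemann sum
`δ Σ_{j∈ℤ} inf_{[jδ,(j+1)δ]} ψ̌` is at least `e^{-2δ} ∫ ψ̌`; (3) the upper Riemann sum
`δ Σ_{j∈ℤ} sup_{[jδ,(j+1)δ]} ψ̌` is at most `e^{2δ} ∫ ψ̌`. In particular the difference of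
the upper and lower Riemann sums tends to `0` as `δ → 0` (direct Riemann integrability). -/
theorem exp_convolution_directly_riemann_integrable
    (ψ : ℝ → ℝ) (hψ : Integrable ψ (volume : Measure ℝ)) (hψ0 : ∀ x, 0 ≤ ψ x)
    (ψc : ℝ → ℝ) (hψc : ∀ x, ψc x = ∫ y in Set.Iic x, Real.exp (-(x - y)) * ψ y) :
    (∀ δ : ℝ, 0 < δ → ∀ x : ℝ, Real.exp (-δ) * ψc x ≤ ψc (x + δ)) ∧
    (∀ δ : ℝ, 0 < δ →
      Real.exp (-2 * δ) * ∫ x, ψc x ≤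
        δ * ∑' j : ℤ, sInf (ψc '' Set.Icc (j * δ) ((j + 1) * δ))) ∧
    (∀ δ : ℝ, 0 < δ →
      δ * ∑' j : ℤ, sSup (ψc '' Set.Icc (j * δ) ((j + 1) * δ)) ≤
        Real.exp (2 * δ) * ∫ x, ψc x) ∧
    Tendsto
      (fun δ : ℝ =>
        δ * ∑' j : ℤ, sSup (ψc '' Set.Icc (j * δ) ((j + 1) * δ)) -
        δ * ∑' j : ℤ, sInf (ψc '' Set.Icc (j * δ) ((j + 1) * δ)))
      (nhdsWithin 0 (Set.Ioi 0)) (nhds 0) := by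
  -- integrability of the integrand on `Iic x`
  have hint : ∀ x : ℝ, IntegrableOn (fun y => Real.exp (-(x - y)) * ψ y) (Set.Iic x) := by
    intro x
    apply Integrable.mono (hψ.restrict (s := Set.Iic x))
    · exact ((Real.continuous_exp.comp (by continuity)).aestronglyMeasurable).mul hψ.1.restrict
    · filter_upwards [ae_restrict_mem measurableSet_Iic] with y hy
      rw [Real.norm_eq_abs, Real.norm_eq_abs, abs_mul, abs_of_nonneg (Real.exp_pos _).le,
        abs_of_nonneg (hψ0 y)]
      have h1 : Real.exp (-(x - y)) ≤ 1 := Real.exp_le_one_iff.mpr (by simp at hy ⊢; linarith)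
      nlinarith [hψ0 y]
  -- nonnegativity of ψc
  have hpos : ∀ x, 0 ≤ ψc x := by
    intro x
    rw [hψc]
    exact setIntegral_nonneg measurableSet_Iic
      (fun y _ => mul_nonneg (Real.exp_pos _).le (hψ0 y))
  -- the key monotonicity inequality
  have hmono : ∀ t : ℝ, 0 ≤ t → ∀ x, Real.exp (-t) * ψc x ≤ ψc (x + t) := by
    intro t ht x
    rw [hψc, hψc]
    have h1 : Real.exp (-t) * ∫ y in Set.Iic x, Real.exp (-(x - y)) * ψ y
        = ∫ y in Set.Iic x, Real.exp (-(x + t - y)) * ψ y := by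
      rw [← integral_const_mul]
      congr 1
      funext y
      rw [← mul_assoc, ← Real.exp_add]
      ring_nf
    rw [h1]
    exact setIntegral_mono_set (hint (x + t))
      (Filter.Eventually.of_forall (fun y => mul_nonneg (Real.exp_pos _).le (hψ0 y)))
      (HasSubset.Subset.eventuallyLE (Set.Iic_subset_Iic.mpr (by linarith)))
  have hmono2 : ∀ x t : ℝ, x ≤ t → Real.exp (-(t - x)) * ψc x ≤ ψc t := by
    intro x t hxt
    have := hmono (t - x) (by linarith) x
    simpa using this
  -- integrability of ψc
  have hψci : Integrable ψc (volume : Measure ℝ) := by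
    set g : ℝ → ℝ := fun t => Set.indicator (Set.Iic (0:ℝ)) Real.exp (-t) with hgdef
    have hgint : Integrable g :=
      ((integrable_indicator_iff measurableSet_Iic).2
        ((integrableOn_exp_Iic 0).congr_fun (fun x _ => rfl) measurableSet_Iic)).comp_neg
    have hconv : ψc = MeasureTheory.convolution ψ g (ContinuousLinearMap.lsmul ℝ ℝ) volume := by
      funext x
      rw [hψc, MeasureTheory.convolution_def]
      rw [← integral_indicator measurableSet_Iic]
      congr 1
      funext y
      simp only [ContinuousLinearMap.lsmul_apply, smul_eq_mul, hgdef]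
      by_cases hy : y ≤ x
      · rw [Set.indicator_of_mem (Set.mem_Iic.mpr hy)]
        rw [Set.indicator_of_mem (by simp; linarith)]
        ring_nf
      · rw [Set.indicator_of_notMem (by simp [hy])]
        rw [Set.indicator_of_notMem (by simp; linarith)]
        simp
    rw [hconv]
    exact hψ.integrable_convolution _ hgint
  have hI0 : 0 ≤ ∫ x, ψc x := integral_nonneg hpos
  -- main quantitative bounds, for each δ > 0
  have main : ∀ δ : ℝ, 0 < δ →
      (Real.exp (-2 * δ) * ∫ x, ψc x ≤
        δ * ∑' j : ℤ, sInf (ψc '' Set.Icc (j * δ) ((j + 1) * δ))) ∧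
      (δ * ∑' j : ℤ, sSup (ψc '' Set.Icc (j * δ) ((j + 1) * δ)) ≤
        Real.exp (2 * δ) * ∫ x, ψc x) ∧
      (∑' j : ℤ, sInf (ψc '' Set.Icc (j * δ) ((j + 1) * δ)) ≤
        ∑' j : ℤ, sSup (ψc '' Set.Icc (j * δ) ((j + 1) * δ))) := by
    intro δ hδ
    set In : ℤ → ℝ := fun j => sInf (ψc '' Set.Icc (j * δ) ((j + 1) * δ)) with hIn
    set S : ℤ → ℝ := fun j => sSup (ψc '' Set.Icc (j * δ) ((j + 1) * δ)) with hS
    set c : ℤ → ℝ := fun j => ∫ x in Set.Ico (j * δ) ((j + 1) * δ), ψc x with hc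
    have hle : ∀ j : ℤ, (j : ℝ) * δ ≤ (j + 1) * δ := fun j => by nlinarith
    have hne : ∀ j : ℤ, (ψc '' Set.Icc (j * δ) ((j + 1) * δ)).Nonempty :=
      fun j => ⟨ψc (j * δ), Set.mem_image_of_mem _ (Set.left_mem_Icc.mpr (hle j))⟩
    -- upper bound for elements of the image
    have hub : ∀ j : ℤ, ∀ z ∈ ψc '' Set.Icc (j * δ) ((j + 1) * δ),
        z ≤ Real.exp δ * ψc ((j + 1) * δ) := by
      rintro j z ⟨x, hx, rfl⟩
      obtain ⟨hx1, hx2⟩ := hx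
      have h1 := hmono2 x ((j + 1) * δ) hx2
      have h2 : Real.exp (-δ) ≤ Real.exp (-((j + 1) * δ - x)) :=
        Real.exp_le_exp.mpr (by linarith)
      have h3 : Real.exp (-δ) * ψc x ≤ ψc ((j + 1) * δ) := by
        nlinarith [hpos x]
      have h4 : Real.exp (-δ) * Real.exp δ = 1 := by
        rw [← Real.exp_add]; simp
      calc ψc x = Real.exp δ * (Real.exp (-δ) * ψc x) := by
            rw [← mul_assoc, mul_comm (Real.exp δ), h4, one_mul]
        _ ≤ Real.exp δ * ψc (((j:ℝ) + 1) * δ) :=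
            mul_le_mul_of_nonneg_left h3 (Real.exp_pos δ).le
    have hlb : ∀ j : ℤ, ∀ z ∈ ψc '' Set.Icc (j * δ) ((j + 1) * δ),
        Real.exp (-δ) * ψc (j * δ) ≤ z := by
      rintro j z ⟨x, hx, rfl⟩
      obtain ⟨hx1, hx2⟩ := hx
      have h1 := hmono2 (j * δ) x hx1
      have h2 : Real.exp (-δ) ≤ Real.exp (-(x - j * δ)) :=
        Real.exp_le_exp.mpr (by linarith)
      nlinarith [hpos (j * δ)]
    have hbddA : ∀ j : ℤ, BddAbove (ψc '' Set.Icc (j * δ) ((j + 1) * δ)) :=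
      fun j => ⟨_, fun z hz => hub j z hz⟩
    have hbddB : ∀ j : ℤ, BddBelow (ψc '' Set.Icc (j * δ) ((j + 1) * δ)) :=
      fun j => ⟨0, by rintro z ⟨x, _, rfl⟩; exact hpos x⟩
    have hS_ub : ∀ j : ℤ, S j ≤ Real.exp δ * ψc ((j + 1) * δ) :=
      fun j => csSup_le (hne j) (hub j)
    have hIn_lb : ∀ j : ℤ, Real.exp (-δ) * ψc (j * δ) ≤ In j :=
      fun j => le_csInf (hne j) (hlb j)
    have hIn_nn : ∀ j : ℤ, 0 ≤ In j :=
      fun j => le_trans (by nlinarith [Real.exp_pos (-δ), hpos ((j:ℝ) * δ)]) (hIn_lb j)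
    have hInS : ∀ j : ℤ, In j ≤ S j :=
      fun j => csInf_le_csSup (hne j) (hbddB j) (hbddA j)
    have hS_nn : ∀ j : ℤ, 0 ≤ S j := fun j => le_trans (hIn_nn j) (hInS j)
    -- volume of the intervals
    have hvol : ∀ j : ℤ, (volume (Set.Ico ((j:ℝ) * δ) ((j + 1) * δ))).toReal = δ := by
      intro j
      rw [Real.volume_Ico, ENNReal.toReal_ofReal (by nlinarith)]
      ring
    -- integral bounds on each interval
    have hc_ub : ∀ j : ℤ, c j ≤ δ * (Real.exp δ * ψc ((j + 1) * δ)) := by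
      intro j
      have h1 : c j ≤ ∫ _x in Set.Ico ((j:ℝ) * δ) ((j + 1) * δ),
          Real.exp δ * ψc ((j + 1) * δ) := by
        apply setIntegral_mono_on (hψci.integrableOn) ((integrableOn_const_iff).mpr (Or.inr (by
          rw [Real.volume_Ico]; exact ENNReal.ofReal_lt_top))) measurableSet_Ico
        intro x hx
        exact hub j (ψc x) (Set.mem_image_of_mem _ ⟨hx.1, hx.2.le⟩)
      rw [setIntegral_const, measureReal_def, hvol j, smul_eq_mul] at h1
      exact h1
    have hc_lb : ∀ j : ℤ, δ * (Real.exp (-δ) * ψc (j * δ)) ≤ c j := by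
      intro j
      have h1 : (∫ _x in Set.Ico ((j:ℝ) * δ) ((j + 1) * δ),
          Real.exp (-δ) * ψc (j * δ)) ≤ c j := by
        apply setIntegral_mono_on ((integrableOn_const_iff).mpr (Or.inr (by
          rw [Real.volume_Ico]; exact ENNReal.ofReal_lt_top))) (hψci.integrableOn)
          measurableSet_Ico
        intro x hx
        exact hlb j (ψc x) (Set.mem_image_of_mem _ ⟨hx.1, hx.2.le⟩)
      rw [setIntegral_const, measureReal_def, hvol j, smul_eq_mul] at h1
      exact h1
    have hc_nn : ∀ j : ℤ, 0 ≤ c j :=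
      fun j => setIntegral_nonneg measurableSet_Ico (fun x _ => hpos x)
    -- partition of ℝ
    have hunion : (⋃ j : ℤ, Set.Ico ((j:ℝ) * δ) ((j + 1) * δ)) = Set.univ := by
      rw [Set.eq_univ_iff_forall]
      intro x
      refine Set.mem_iUnion.mpr ⟨⌊x / δ⌋, ?_, ?_⟩
      · exact (le_div_iff₀ hδ).mp (Int.floor_le _)
      · have h1 : x / δ < ⌊x / δ⌋ + 1 := Int.lt_floor_add_one _
        calc x = (x / δ) * δ := by field_simp
          _ < ((⌊x / δ⌋ : ℝ) + 1) * δ := by nlinarith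
    have hdisj : Pairwise (Function.onFun Disjoint
        (fun j : ℤ => Set.Ico ((j:ℝ) * δ) ((j + 1) * δ))) := by
      intro i j hij
      rw [Function.onFun, Set.Ico_disjoint_Ico]
      rcases lt_or_gt_of_ne hij with h | h
      · have : ((i:ℝ) + 1) ≤ (j:ℝ) := by exact_mod_cast h
        calc min (((i:ℝ) + 1) * δ) (((j:ℝ) + 1) * δ) ≤ ((i:ℝ) + 1) * δ := min_le_left _ _
          _ ≤ (j:ℝ) * δ := by nlinarith
          _ ≤ max ((i:ℝ) * δ) ((j:ℝ) * δ) := le_max_right _ _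
      · have : ((j:ℝ) + 1) ≤ (i:ℝ) := by exact_mod_cast h
        calc min (((i:ℝ) + 1) * δ) (((j:ℝ) + 1) * δ) ≤ ((j:ℝ) + 1) * δ := min_le_right _ _
          _ ≤ (i:ℝ) * δ := by nlinarith
          _ ≤ max ((i:ℝ) * δ) ((j:ℝ) * δ) := le_max_left _ _
    have hHasSum : HasSum c (∫ x, ψc x) := by
      have h := hasSum_integral_iUnion (μ := volume) (f := ψc)
        (s := fun j : ℤ => Set.Ico ((j:ℝ) * δ) ((j + 1) * δ))
        (fun j => measurableSet_Ico) hdisj (by rw [hunion]; exact hψci.integrableOn)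
      rw [hunion] at h
      simpa [hc] using h
    have hcsum : Summable c := hHasSum.summable
    have hctsum : ∑' j : ℤ, c j = ∫ x, ψc x := hHasSum.tsum_eq
    -- shifted sums
    have hcsum' : Summable (fun j : ℤ => c (j + 1)) :=
      (Equiv.addRight (1 : ℤ)).summable_iff.mpr hcsum |>.congr (fun j => rfl)
    have hctsum' : ∑' j : ℤ, c (j + 1) = ∫ x, ψc x := by
      rw [← hctsum]
      exact (Equiv.addRight (1 : ℤ)).tsum_eq c
    have hexp : Real.exp (-δ) * Real.exp δ = 1 := by rw [← Real.exp_add]; simp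
    -- `δ * S j ≤ exp (2δ) * c (j+1)`
    have hkeyS : ∀ j : ℤ, δ * S j ≤ Real.exp (2 * δ) * c (j + 1) := by
      intro j
      have h1 := hS_ub j
      have h2 := hc_lb (j + 1)
      have h3 : ((j:ℝ) + 1) = ((j + 1 : ℤ) : ℝ) := by push_cast; ring
      rw [← h3] at h2
      have h4 : Real.exp (2 * δ) = Real.exp δ * Real.exp δ := by
        rw [← Real.exp_add]; ring_nf
      rw [h4]
      have hA : δ * ψc (((j:ℝ) + 1) * δ) ≤ Real.exp δ * c (j + 1) := by
        have e1 : Real.exp δ * (δ * (Real.exp (-δ) * ψc (((j:ℝ) + 1) * δ)))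
            = δ * ψc (((j:ℝ) + 1) * δ) := by
          calc Real.exp δ * (δ * (Real.exp (-δ) * ψc (((j:ℝ) + 1) * δ)))
              = (Real.exp (-δ) * Real.exp δ) * (δ * ψc (((j:ℝ) + 1) * δ)) := by ring
            _ = δ * ψc (((j:ℝ) + 1) * δ) := by rw [hexp, one_mul]
        calc δ * ψc (((j:ℝ) + 1) * δ)
            = Real.exp δ * (δ * (Real.exp (-δ) * ψc (((j:ℝ) + 1) * δ))) := e1.symm
          _ ≤ Real.exp δ * c (j + 1) := mul_le_mul_of_nonneg_left h2 (Real.exp_pos δ).le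
      calc δ * S j ≤ δ * (Real.exp δ * ψc (((j:ℝ) + 1) * δ)) :=
            mul_le_mul_of_nonneg_left h1 hδ.le
        _ = Real.exp δ * (δ * ψc (((j:ℝ) + 1) * δ)) := by ring
        _ ≤ Real.exp δ * (Real.exp δ * c (j + 1)) :=
            mul_le_mul_of_nonneg_left hA (Real.exp_pos δ).le
        _ = Real.exp δ * Real.exp δ * c (j + 1) := by ring
    -- `c j ≤ δ * exp (2δ) * In (j+1)`
    have hkeyI : ∀ j : ℤ, c j ≤ δ * (Real.exp (2 * δ) * In (j + 1)) := by
      intro j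
      have h1 := hc_ub j
      have h2 := hIn_lb (j + 1)
      have h3 : ((j:ℝ) + 1) = ((j + 1 : ℤ) : ℝ) := by push_cast; ring
      rw [← h3] at h2
      have h4 : Real.exp (2 * δ) = Real.exp δ * Real.exp δ := by
        rw [← Real.exp_add]; ring_nf
      rw [h4]
      have hA2 : ψc (((j:ℝ) + 1) * δ) ≤ Real.exp δ * In (j + 1) := by
        calc ψc (((j:ℝ) + 1) * δ)
            = Real.exp δ * (Real.exp (-δ) * ψc (((j:ℝ) + 1) * δ)) := by
              rw [← mul_assoc, mul_comm (Real.exp δ), hexp, one_mul]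
          _ ≤ Real.exp δ * In (j + 1) := mul_le_mul_of_nonneg_left h2 (Real.exp_pos δ).le
      calc c j ≤ δ * (Real.exp δ * ψc (((j:ℝ) + 1) * δ)) := h1
        _ ≤ δ * (Real.exp δ * (Real.exp δ * In (j + 1))) :=
            mul_le_mul_of_nonneg_left
              (mul_le_mul_of_nonneg_left hA2 (Real.exp_pos δ).le) hδ.le
        _ = δ * (Real.exp δ * Real.exp δ * In (j + 1)) := by ring
    -- summability of S and In
    have hsumS : Summable S := by
      apply Summable.of_nonneg_of_le hS_nn
        (f := fun j => (Real.exp (2 * δ) / δ) * c (j + 1)) ?_ (hcsum'.mul_left _)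
      intro j
      show S j ≤ Real.exp (2 * δ) / δ * c (j + 1)
      rw [div_mul_eq_mul_div, le_div_iff₀ hδ]
      nlinarith [hkeyS j]
    have hsumIn : Summable In := Summable.of_nonneg_of_le hIn_nn hInS hsumS
    have hsumIn' : Summable (fun j : ℤ => In (j + 1)) :=
      (Equiv.addRight (1 : ℤ)).summable_iff.mpr hsumIn |>.congr (fun j => rfl)
    have hIntsum' : ∑' j : ℤ, In (j + 1) = ∑' j : ℤ, In j :=
      (Equiv.addRight (1 : ℤ)).tsum_eq In
    refine ⟨?_, ?_, ?_⟩
    · -- lower Riemann sum bound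
      have h1 : ∫ x, ψc x ≤ δ * (Real.exp (2 * δ) * ∑' j : ℤ, In j) := by
        calc ∫ x, ψc x = ∑' j : ℤ, c j := hctsum.symm
          _ ≤ ∑' j : ℤ, δ * (Real.exp (2 * δ) * In (j + 1)) :=
              Summable.tsum_le_tsum hkeyI hcsum (((hsumIn'.mul_left _).mul_left _))
          _ = δ * (Real.exp (2 * δ) * ∑' j : ℤ, In (j + 1)) := by
              rw [tsum_mul_left, tsum_mul_left]
          _ = δ * (Real.exp (2 * δ) * ∑' j : ℤ, In j) := by rw [hIntsum']
      have h2 : Real.exp (-(2 * δ)) * Real.exp (2 * δ) = 1 := by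
        rw [← Real.exp_add]; simp
      have h3 : Real.exp (-2 * δ) = Real.exp (-(2 * δ)) := by ring_nf
      rw [h3]
      nlinarith [Real.exp_pos (-(2 * δ)), Real.exp_pos (2 * δ)]
    · -- upper Riemann sum bound
      calc δ * ∑' j : ℤ, S j = ∑' j : ℤ, δ * S j := (tsum_mul_left).symm
        _ ≤ ∑' j : ℤ, Real.exp (2 * δ) * c (j + 1) :=
            Summable.tsum_le_tsum hkeyS (hsumS.mul_left _) (hcsum'.mul_left _)
        _ = Real.exp (2 * δ) * ∑' j : ℤ, c (j + 1) := tsum_mul_left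
        _ = Real.exp (2 * δ) * ∫ x, ψc x := by rw [hctsum']
    · exact Summable.tsum_le_tsum hInS hsumIn hsumS
  refine ⟨fun δ hδ x => hmono δ hδ.le x, fun δ hδ => (main δ hδ).1, fun δ hδ => (main δ hδ).2.1, ?_⟩
  -- the squeeze argument
  apply squeeze_zero' (g := fun δ => (Real.exp (2 * δ) - Real.exp (-2 * δ)) * ∫ x, ψc x)
  · filter_upwards [self_mem_nhdsWithin] with δ hδ
    have hδ' : (0:ℝ) < δ := hδ
    have h := (main δ hδ').2.2
    have := mul_le_mul_of_nonneg_left h hδ'.le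
    linarith
  · filter_upwards [self_mem_nhdsWithin] with δ hδ
    have hδ' : (0:ℝ) < δ := hδ
    have h1 := (main δ hδ').1
    have h2 := (main δ hδ').2.1
    have : (Real.exp (2 * δ) - Real.exp (-2 * δ)) * ∫ x, ψc x
        = (Real.exp (2 * δ) * ∫ x, ψc x) - Real.exp (-2 * δ) * ∫ x, ψc x := by ring
    linarith
  · have hcont : Continuous (fun δ : ℝ => (Real.exp (2 * δ) - Real.exp (-2 * δ)) * ∫ x, ψc x) :=
      ((Real.continuous_exp.comp (continuous_const.mul continuous_id)).sub
        (Real.continuous_exp.comp (continuous_const.mul continuous_id))).mul continuous_const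
    have h0 : ((Real.exp (2 * 0) - Real.exp (-2 * 0)) * ∫ x, ψc x) = 0 := by simp
    have := hcont.tendsto 0
    rw [h0] at this
    exact this.mono_left nhdsWithin_le_nhds
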